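/- Let X be a binomial random variable with parameters 2n and 1/2, and let c be an integer with 0 < c < n. Then the variance of X conditioned on the event {n - c ≤ X ≤ n + c} is at least c/2, i.e. at least the variance of a Bin(2c, 1/2) random variable. -/

import Mathlib

open Finset

private lemma sum_choose_real (m : ℕ) :
    ∑ k ∈ range (m + 1), ((m.choose k : ℕ) : ℝ) = 2 ^ m := by
  rw [← Nat.cast_sum, Nat.sum_range_choose]
  push_cast
  ring

private lemma sum_k_choose_real (m : ℕ) :
    ∑ k ∈ range (m + 1), (k : ℝ) * (m.choose k : ℝ) = m * 2 ^ m / 2 := by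
  have hrefl : ∑ k ∈ range (m + 1), (k : ℝ) * (m.choose k : ℝ)
      = ∑ k ∈ range (m + 1), ((m : ℝ) - k) * (m.choose k : ℝ) := by
    conv_lhs => rw [← Finset.sum_range_reflect]
    refine Finset.sum_congr rfl fun j hj => ?_
    have hj' : j ≤ m := by simpa [Nat.lt_succ_iff] using Finset.mem_range.mp hj
    have h1 : m + 1 - 1 - j = m - j := by omega
    rw [h1, Nat.choose_symm hj', Nat.cast_sub hj']
  have h2 : ∑ k ∈ range (m+1), ((k:ℝ) * (m.choose k : ℝ) + ((m:ℝ) - k) * (m.choose k : ℝ))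
      = m * 2 ^ m := by
    have hterm : ∀ k ∈ range (m+1),
        (k:ℝ) * (m.choose k : ℝ) + ((m:ℝ) - k) * (m.choose k : ℝ)
          = (m:ℝ) * (m.choose k : ℝ) := fun k _ => by ring
    rw [Finset.sum_congr rfl hterm, ← Finset.mul_sum, sum_choose_real]
  rw [Finset.sum_add_distrib] at h2
  linarith [hrefl, h2]

private lemma sum_kk_choose_real (m M : ℕ) (hM : M = m + 2) :
    ∑ k ∈ range (M + 1), (k : ℝ) * ((k:ℝ) - 1) * (M.choose k : ℝ)
      = (M : ℝ) * ((M:ℝ) - 1) * 2 ^ m := by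
  subst hM
  rw [Finset.sum_range_succ']
  rw [Finset.sum_range_succ']
  push_cast
  have hterm : ∀ i ∈ range (m + 1),
      ((i:ℝ) + 1 + 1) * (((i:ℝ) + 1 + 1) - 1) * (((m+2).choose (i+1+1) : ℕ) : ℝ)
        = ((m:ℝ)+2) * ((m:ℝ)+1) * (m.choose i : ℝ) := by
    intro i hi
    have hnat : (i+2) * (i+1) * ((m+2).choose (i+2)) = (m+2) * ((m+1) * (m.choose i)) := by
      have h1 := Nat.add_one_mul_choose_eq (m+1) (i+1)
      have h2 := Nat.add_one_mul_choose_eq m i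
      calc (i+2)*(i+1)*((m+2).choose (i+2))
          = (i+1) * ((m+2).choose (i+2) * (i+2)) := by ring
        _ = (i+1) * ((m+2) * ((m+1).choose (i+1))) := by rw [← h1]
        _ = (m+2) * ((m+1).choose (i+1) * (i+1)) := by ring
        _ = (m+2) * ((m+1) * m.choose i) := by rw [← h2]
    have := congrArg (fun x : ℕ => (x : ℝ)) hnat
    push_cast at this
    linarith [this]
  rw [Finset.sum_congr rfl hterm, ← Finset.mul_sum, sum_choose_real]
  ring

private lemma binom_var (c : ℕ) (hc : 0 < c) :
    ∑ k ∈ range (2*c + 1), ((2*c).choose k : ℝ) * (2 * ((k:ℝ) - c)^2 - c) = 0 := by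
  obtain ⟨d, rfl⟩ : ∃ d, c = d + 1 := ⟨c - 1, by omega⟩
  have h0 := sum_choose_real (2*(d+1))
  have h1 := sum_k_choose_real (2*(d+1))
  have h2 := sum_kk_choose_real (2*d) (2*(d+1)) (by ring)
  have hsplit : ∀ k ∈ range (2*(d+1) + 1),
      ((2*(d+1)).choose k : ℝ) * (2 * ((k:ℝ) - ((d:ℝ)+1))^2 - ((d:ℝ)+1))
        = 2 * ((k:ℝ) * ((k:ℝ) - 1) * ((2*(d+1)).choose k : ℝ))
          + (2 - 4*((d:ℝ)+1)) * ((k:ℝ) * ((2*(d+1)).choose k : ℝ))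
          + (2*((d:ℝ)+1)^2 - ((d:ℝ)+1)) * ((2*(d+1)).choose k : ℝ) := by
    intro k _
    ring
  have hgoal : ∑ k ∈ range (2*(d+1) + 1),
      ((2*(d+1)).choose k : ℝ) * (2 * ((k:ℝ) - ((d:ℝ)+1))^2 - ((d:ℝ)+1)) = 0 := by
    rw [Finset.sum_congr rfl hsplit, Finset.sum_add_distrib, Finset.sum_add_distrib,
      ← Finset.mul_sum, ← Finset.mul_sum, ← Finset.mul_sum]
    have e : (2*d) + 1 = 2*(d+1) - 1 := by omega
    rw [h0, h1, h2]
    push_cast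
    ring
  convert hgoal using 2 with k
  push_cast
  ring

private lemma monoM (n c : ℕ) (hcn : c < n) (j j' : ℕ) (hjj' : j ≤ j') :
    j' ≤ c →
    (2*c).choose (c+j') * (2*n).choose (n+j) ≤ (2*c).choose (c+j) * (2*n).choose (n+j') := by
  induction j', hjj' using Nat.le_induction with
  | base => intro _; exact le_rfl
  | succ j' hj ih =>
    intro hj'c
    have ihh := ih (by omega)
    have harg1 : c + (j' + 1) = c + j' + 1 := by omega
    have harg2 : n + (j' + 1) = n + j' + 1 := by omega
    rw [harg1, harg2]
    have hstep : (2*c).choose (c+j'+1) * (2*n).choose (n+j')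
        ≤ (2*c).choose (c+j') * (2*n).choose (n+j'+1) := by
      have e1 : (2*c).choose (c+j'+1) * (c+j'+1) = (2*c).choose (c+j') * (c - j') := by
        have h := Nat.choose_succ_right_eq (2*c) (c+j')
        rw [show 2*c - (c+j') = c - j' by omega] at h
        exact h
      have e2 : (2*n).choose (n+j'+1) * (n+j'+1) = (2*n).choose (n+j') * (n - j') := by
        have h := Nat.choose_succ_right_eq (2*n) (n+j')
        rw [show 2*n - (n+j') = n - j' by omega] at h
        exact h
      have hcore : (c - j') * (n+j'+1) ≤ (n - j') * (c+j'+1) := by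
        obtain ⟨u, rfl⟩ : ∃ u, c = j' + u := ⟨c - j', by omega⟩
        obtain ⟨v, rfl⟩ : ∃ v, n = j' + v := ⟨n - j', by omega⟩
        have huv : u ≤ v := by omega
        simp only [Nat.add_sub_cancel_left]
        nlinarith
      apply Nat.le_of_mul_le_mul_right _ (show 0 < (c+j'+1)*(n+j'+1) by positivity)
      calc (2*c).choose (c+j'+1) * (2*n).choose (n+j') * ((c+j'+1)*(n+j'+1))
          = ((2*c).choose (c+j'+1) * (c+j'+1)) * ((2*n).choose (n+j') * (n+j'+1)) := by ring
        _ = ((2*c).choose (c+j') * (c - j')) * ((2*n).choose (n+j') * (n+j'+1)) := by rw [e1]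
        _ = ((2*c).choose (c+j') * (2*n).choose (n+j')) * ((c - j') * (n+j'+1)) := by ring
        _ ≤ ((2*c).choose (c+j') * (2*n).choose (n+j')) * ((n - j') * (c+j'+1)) :=
            Nat.mul_le_mul_left _ hcore
        _ = ((2*c).choose (c+j')) * ((2*n).choose (n+j') * (n - j')) * (c+j'+1) := by ring
        _ = ((2*c).choose (c+j')) * ((2*n).choose (n+j'+1) * (n+j'+1)) * (c+j'+1) := by rw [e2]
        _ = (2*c).choose (c+j') * (2*n).choose (n+j'+1) * ((c+j'+1)*(n+j'+1)) := by ring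
    apply Nat.le_of_mul_le_mul_right _ (show 0 < (2*n).choose (n+j') from Nat.choose_pos (by omega))
    calc (2*c).choose (c+j'+1) * (2*n).choose (n+j) * (2*n).choose (n+j')
        = ((2*c).choose (c+j'+1) * (2*n).choose (n+j')) * (2*n).choose (n+j) := by ring
      _ ≤ ((2*c).choose (c+j') * (2*n).choose (n+j'+1)) * (2*n).choose (n+j) :=
          Nat.mul_le_mul_right _ hstep
      _ = ((2*c).choose (c+j') * (2*n).choose (n+j)) * (2*n).choose (n+j'+1) := by ring
      _ ≤ ((2*c).choose (c+j) * (2*n).choose (n+j')) * (2*n).choose (n+j'+1) :=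
          Nat.mul_le_mul_right _ ihh
      _ = (2*c).choose (c+j) * (2*n).choose (n+j'+1) * (2*n).choose (n+j') := by ring

/-- The conditional variance of `X ~ Bin(2n, 1/2)` given `n - c ≤ X ≤ n + c`
(whose conditional mean is `n` by symmetry) is at least `c / 2`,
the variance of `Bin(2c, 1/2)`. -/
theorem stmt_5 (n c : ℕ) (hc : 0 < c) (hcn : c < n) :
    (∑ x ∈ Finset.Icc (n - c) (n + c), ((2 * n).choose x : ℝ) * ((x : ℝ) - n) ^ 2) /
        (∑ x ∈ Finset.Icc (n - c) (n + c), ((2 * n).choose x : ℝ))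
      ≥ (c : ℝ) / 2 := by
  have hcle : c ≤ n := hcn.le
  rw [← Finset.Ico_add_one_right_eq_Icc, Finset.sum_Ico_eq_sum_range, Finset.sum_Ico_eq_sum_range]
  have hlen : n + c + 1 - (n - c) = 2*c + 1 := by omega
  rw [hlen]
  -- rewrite numerator summand
  have hcast : ∀ k ∈ range (2*c+1),
      ((2 * n).choose (n - c + k) : ℝ) * (((n - c + k : ℕ) : ℝ) - n) ^ 2
        = ((2 * n).choose (n - c + k) : ℝ) * ((k:ℝ) - c) ^ 2 := by
    intro k hk
    rw [Nat.cast_add, Nat.cast_sub hcle]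
    ring_nf
  rw [Finset.sum_congr rfl hcast]
  have hD : 0 < ∑ k ∈ range (2*c+1), ((2 * n).choose (n - c + k) : ℝ) := by
    apply Finset.sum_pos
    · intro k hk
      have hk' : k ≤ 2*c := by simpa [Nat.lt_succ_iff] using Finset.mem_range.mp hk
      exact_mod_cast Nat.choose_pos (by omega)
    · exact ⟨0, Finset.mem_range.mpr (by omega)⟩
  rw [ge_iff_le, le_div_iff₀ hD]
  -- main inequality
  suffices key : 0 ≤ ∑ k ∈ range (2*c+1),
      ((2 * n).choose (n - c + k) : ℝ) * (2 * ((k:ℝ) - c)^2 - c) by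
    have expand : ∑ k ∈ range (2*c+1),
        ((2 * n).choose (n - c + k) : ℝ) * (2 * ((k:ℝ) - c)^2 - c)
        = 2 * (∑ k ∈ range (2*c+1), ((2 * n).choose (n - c + k) : ℝ) * ((k:ℝ) - c)^2)
          - c * (∑ k ∈ range (2*c+1), ((2 * n).choose (n - c + k) : ℝ)) := by
      rw [Finset.mul_sum, Finset.mul_sum, ← Finset.sum_sub_distrib]
      exact Finset.sum_congr rfl fun k _ => by ring
    rw [expand] at key
    linarith
  -- threshold
  have hex : ∃ j, c ≤ 2 * j^2 := ⟨c, by nlinarith⟩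
  set j0 := Nat.find hex with hj0def
  have hj0 : c ≤ 2 * j0^2 := Nat.find_spec hex
  have hj0c : j0 ≤ c := Nat.find_le (by nlinarith)
  have hmin : ∀ j, j < j0 → ¬ c ≤ 2 * j^2 := fun j hj => Nat.find_min hex hj
  have hB0 : (0:ℝ) < ((2*c).choose (c+j0) : ℝ) := by
    exact_mod_cast Nat.choose_pos (by omega)
  set lam : ℝ := ((2*n).choose (n + j0) : ℝ) / ((2*c).choose (c + j0) : ℝ) with hlam
  -- claim at points c + j
  have claimJ : ∀ j, j ≤ c →
      lam * (((2*c).choose (c+j) : ℝ) * (2*(j:ℝ)^2 - c))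
        ≤ ((2*n).choose (n+j) : ℝ) * (2*(j:ℝ)^2 - c) := by
    intro j hjc
    rw [hlam, div_mul_eq_mul_div, div_le_iff₀ hB0]
    by_cases hcase : c ≤ 2 * j^2
    · have hg : (0:ℝ) ≤ 2*(j:ℝ)^2 - c := by
        have : (c:ℝ) ≤ 2*(j:ℝ)^2 := by exact_mod_cast hcase
        linarith
      have hjj0 : j0 ≤ j := by
        by_contra h
        exact hmin j (by omega) hcase
      have hM := monoM n c hcn j0 j hjj0 hjc
      have hMr : ((2*c).choose (c+j) : ℝ) * ((2*n).choose (n+j0) : ℝ)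
          ≤ ((2*c).choose (c+j0) : ℝ) * ((2*n).choose (n+j) : ℝ) := by exact_mod_cast hM
      nlinarith [mul_nonneg (sub_nonneg.mpr hMr) hg]
    · push_neg at hcase
      have hg : 2*(j:ℝ)^2 - c ≤ 0 := by
        have : 2*(j:ℝ)^2 ≤ (c:ℝ) := by exact_mod_cast hcase.le
        linarith
      have hjj0 : j ≤ j0 := by
        by_contra h
        push_neg at h
        have : 2*j0^2 ≤ 2*j^2 := by nlinarith
        omega
      have hM := monoM n c hcn j j0 hjj0 hj0c
      have hMr : ((2*c).choose (c+j0) : ℝ) * ((2*n).choose (n+j) : ℝ)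
          ≤ ((2*c).choose (c+j) : ℝ) * ((2*n).choose (n+j0) : ℝ) := by exact_mod_cast hM
      nlinarith [mul_nonneg (sub_nonneg.mpr hMr) (neg_nonneg.mpr hg)]
  -- termwise claim on range
  have termwise : ∀ k ∈ range (2*c+1),
      lam * (((2*c).choose k : ℝ) * (2*((k:ℝ) - c)^2 - c))
        ≤ ((2 * n).choose (n - c + k) : ℝ) * (2*((k:ℝ) - c)^2 - c) := by
    intro k hk
    have hk' : k ≤ 2*c := by simpa [Nat.lt_succ_iff] using Finset.mem_range.mp hk
    by_cases hkc : c ≤ k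
    · obtain ⟨j, rfl⟩ : ∃ j, k = c + j := ⟨k - c, by omega⟩
      have hjc : j ≤ c := by omega
      have hidx : n - c + (c + j) = n + j := by omega
      rw [hidx]
      have hgj : ((c + j : ℕ) : ℝ) - c = (j:ℝ) := by push_cast; ring
      rw [hgj]
      exact claimJ j hjc
    · push_neg at hkc
      obtain ⟨j, hjc, rfl⟩ : ∃ j, j ≤ c ∧ k = c - j := ⟨c - k, by omega, by omega⟩
      have hidx : n - c + (c - j) = 2*n - (n + j) := by omega
      rw [hidx, Nat.choose_symm (by omega : n + j ≤ 2*n)]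
      rw [show c - j = 2*c - (c+j) by omega, Nat.choose_symm (by omega : c + j ≤ 2*c)]
      have hgj : ((2*c - (c + j) : ℕ) : ℝ) - c = -(j:ℝ) := by
        rw [Nat.cast_sub (by omega : c + j ≤ 2*c)]
        push_cast
        ring
      rw [hgj]
      have hsq : (-(j:ℝ))^2 = (j:ℝ)^2 := by ring
      rw [hsq]
      exact claimJ j hjc
  calc (0:ℝ) = lam * ∑ k ∈ range (2*c+1), ((2*c).choose k : ℝ) * (2*((k:ℝ) - c)^2 - c) := by
        rw [binom_var c hc, mul_zero]
    _ = ∑ k ∈ range (2*c+1), lam * (((2*c).choose k : ℝ) * (2*((k:ℝ) - c)^2 - c)) :=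
        Finset.mul_sum _ _ _
    _ ≤ ∑ k ∈ range (2*c+1), ((2 * n).choose (n - c + k) : ℝ) * (2*((k:ℝ) - c)^2 - c) :=
        Finset.sum_le_sum termwise
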